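/- Let K be an algebraically closed field, q1, q2 primitive l1-th and l2-th roots of unity (l1, l2 ≥ 2), λ a primitive l3-th root of unity, and L3 = l3/gcd(l3, l1*l2). For μ = (μ1, μ2, μ3, μ4) ∈ (K*)^4, the K-vector space V with basis e(a1,a2), 0 ≤ a1 ≤ l1·L3 - 1, 0 ≤ a2 ≤ l2 - 1, equipped with the action: e(a1,a2)x1 = μ1 e(a1+1, a2) (indices cyclic, with twist λ^{-a2 l1 L3} when wrapping), e(a1,a2)x2 = μ2 (q1λ)^{a1} e(a1, a2+1) (cyclic in a2), e(a1,a2)y1 = μ1^{-1}((q1^{a1}μ3 - 1)/(q1-1)) e(a1-1,a2) (with twist λ^{a2 l1 L3} when a1 = 0), e(a1,a2)y2 = μ2^{-1}λ^{-a1}((q2^{a2}μ4 - μ3)/(q2-1)) e(a1, a2-1) (cyclic), defines an A(q1,q2,λ)-module on which z1 acts by e(a1,a2) ↦ μ3 q1^{a1} e(a1,a2) and z2 by e(a1,a2) ↦ μ4 q1^{a1} q2^{a2} e(a1,a2). -/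

import Mathlib

open Matrix
set_option linter.unusedSectionVars false

section SM
variable {ι : Type*} [Fintype ι] [DecidableEq ι] {K : Type*} [Field K]

def sm (f : ι → ι) (c : ι → K) : Matrix ι ι K :=
  Matrix.of fun b a => if b = f a then c a else 0

lemma sm_mul (f g : ι → ι) (c d : ι → K) :
    sm f c * sm g d = sm (fun a => f (g a)) (fun a => c (g a) * d a) := by
  ext b a
  simp only [sm, Matrix.mul_apply, Matrix.of_apply, mul_ite, mul_zero, ite_mul, zero_mul]
  rw [Finset.sum_ite_eq' Finset.univ (g a)]
  simp [ite_mul]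

lemma smul_sm (k : K) (f : ι → ι) (c : ι → K) :
    k • sm f c = sm f (fun a => k * c a) := by
  ext b a; simp [sm, mul_ite]

lemma sm_one : sm (fun a : ι => a) (fun _ => (1 : K)) = 1 := by
  ext b a; simp [sm, Matrix.one_apply, eq_comm]

lemma sm_add (f : ι → ι) (c d : ι → K) :
    sm f c + sm f d = sm f (fun a => c a + d a) := by
  ext b a; simp [sm]; split <;> simp

lemma sm_sub (f : ι → ι) (c d : ι → K) :
    sm f c - sm f d = sm f (fun a => c a - d a) := by
  ext b a; simp [sm]; split <;> simp

lemma sm_ext {f g : ι → ι} {c d : ι → K} (hf : ∀ a, f a = g a) (hc : ∀ a, c a = d a) :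
    sm f c = sm g d := by
  rw [funext hf, funext hc]

lemma toLin'_sm_single (f : ι → ι) (c : ι → K) (a : ι) :
    Matrix.toLin' (sm f c) (Pi.single a 1) = c a • (Pi.single (f a) 1 : ι → K) := by
  rw [Matrix.toLin'_apply, Matrix.mulVec_single]
  funext b
  simp [sm, Pi.single_apply, mul_ite]

lemma zpow_eq_of_dvd {K : Type*} [Field K] {x : K} (hx : x ≠ 0) {n : ℕ} (hxn : x ^ n = 1)
    {i j : ℤ} (h : (n : ℤ) ∣ i - j) : x ^ i = x ^ j := by
  obtain ⟨k, hk⟩ := h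
  have hi : i = j + (n : ℤ) * k := by linarith
  rw [hi, zpow_add₀ hx, _root_.zpow_mul, zpow_natCast, hxn, _root_.one_zpow, mul_one]

lemma pow_mod_eq {K : Type*} [Field K] {x : K} {n : ℕ} (hxn : x ^ n = 1) (m : ℕ) :
    x ^ (m % n) = x ^ m := by
  conv_rhs => rw [← Nat.mod_add_div m n]
  rw [pow_add, pow_mul, hxn, one_pow, mul_one]
end SM

section Defs
variable {K : Type*} [Field K]

def p1 (N l2 : ℕ) (hN : 0 < N) : Fin N × Fin l2 → Fin N × Fin l2 :=
  fun a => (⟨((a.1 : ℕ) + 1) % N, Nat.mod_lt _ hN⟩, a.2)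

def m1 (N l2 : ℕ) (hN : 0 < N) : Fin N × Fin l2 → Fin N × Fin l2 :=
  fun a => (⟨((a.1 : ℕ) + (N - 1)) % N, Nat.mod_lt _ hN⟩, a.2)

def p2 (N l2 : ℕ) (hl2 : 0 < l2) : Fin N × Fin l2 → Fin N × Fin l2 :=
  fun a => (a.1, ⟨((a.2 : ℕ) + 1) % l2, Nat.mod_lt _ hl2⟩)

def m2 (N l2 : ℕ) (hl2 : 0 < l2) : Fin N × Fin l2 → Fin N × Fin l2 :=
  fun a => (a.1, ⟨((a.2 : ℕ) + (l2 - 1)) % l2, Nat.mod_lt _ hl2⟩)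

def cX1 (lam μ1 : K) (N l2 : ℕ) : Fin N × Fin l2 → K :=
  fun a => if (a.1 : ℕ) = N - 1 then μ1 * lam ^ (-(((a.2 : ℕ) * N : ℕ) : ℤ)) else μ1

def cX2 (q1 lam μ2 : K) (N l2 : ℕ) : Fin N × Fin l2 → K :=
  fun a => μ2 * (q1 * lam) ^ (a.1 : ℕ)

def cY1 (q1 lam μ1 μ3 : K) (N l2 : ℕ) : Fin N × Fin l2 → K :=
  fun a => μ1⁻¹ * ((q1 ^ (a.1 : ℕ) * μ3 - 1) / (q1 - 1)) *
    (if (a.1 : ℕ) = 0 then lam ^ ((a.2 : ℕ) * N) else 1)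

def cY2 (q2 lam μ2 μ3 μ4 : K) (N l2 : ℕ) : Fin N × Fin l2 → K :=
  fun a => μ2⁻¹ * lam ^ (-(((a.1 : ℕ)) : ℤ)) * ((q2 ^ (a.2 : ℕ) * μ4 - μ3) / (q2 - 1))
end Defs

section Rels
variable {K : Type*} [Field K] (q1 q2 lam μ1 μ2 μ3 μ4 : K) {N l2 : ℕ}
  (hN : 0 < N) (hl2 : 0 < l2)

lemma mrel1 (hq1N : q1 ^ N = 1) (hlamN : lam ^ (N * l2) = 1) (hlam0 : lam ≠ 0) :
    sm (p2 N l2 hl2) (cX2 q1 lam μ2 N l2) * sm (p1 N l2 hN) (cX1 lam μ1 N l2) =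
      (q1 * lam) • (sm (p1 N l2 hN) (cX1 lam μ1 N l2) * sm (p2 N l2 hl2) (cX2 q1 lam μ2 N l2)) := by
  rw [sm_mul, sm_mul, smul_sm]
  refine sm_ext (fun a => rfl) (fun a => ?_)
  obtain ⟨a1, a2⟩ := a
  dsimp +instances only [cX1, cX2, p1, p2]
  rcases eq_or_ne (a1 : ℕ) (N - 1) with h | h
  · have h1 : ((a1 : ℕ) + 1) % N = 0 := by
      rw [h, Nat.sub_add_cancel hN, Nat.mod_self]
    rw [if_pos h, if_pos h, h1, h, pow_zero]
    have hql : (q1 * lam) * (q1 * lam) ^ (N - 1) = lam ^ N := by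
      rw [← pow_succ', Nat.sub_add_cancel hN, mul_pow, hq1N, one_mul]
    have hlam : lam ^ ((N : ℤ)) * lam ^ (-(((((a2 : ℕ) + 1) % l2) * N : ℕ) : ℤ)) =
        lam ^ (-(((a2 : ℕ) * N : ℕ) : ℤ)) := by
      rw [← zpow_add₀ hlam0]
      apply zpow_eq_of_dvd hlam0 hlamN
      rcases eq_or_ne ((a2 : ℕ) + 1) l2 with h2 | h2
      · have hm : ((a2 : ℕ) + 1) % l2 = 0 := by rw [h2, Nat.mod_self]
        rw [hm]
        refine ⟨1, ?_⟩
        have h3 : (a2 : ℕ) = l2 - 1 := by omega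
        rw [h3]
        push_cast [Nat.sub_le, hl2]
        ring
      · have hm : ((a2 : ℕ) + 1) % l2 = (a2 : ℕ) + 1 :=
          Nat.mod_eq_of_lt (by have := a2.isLt; omega)
        rw [hm]
        refine ⟨0, ?_⟩
        push_cast
        ring
    calc μ2 * 1 * (μ1 * lam ^ (-(((a2 : ℕ) * N : ℕ) : ℤ)))
        = μ2 * μ1 * (lam ^ ((N : ℤ)) * lam ^ (-(((((a2 : ℕ) + 1) % l2) * N : ℕ) : ℤ))) := by
          rw [hlam]; ring
      _ = q1 * lam * (μ1 * lam ^ (-(((((a2 : ℕ) + 1) % l2) * N : ℕ) : ℤ)) *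
            (μ2 * (q1 * lam) ^ (N - 1))) := by
          rw [zpow_natCast, ← hql]; ring
  · have h1 : ((a1 : ℕ) + 1) % N = (a1 : ℕ) + 1 :=
      Nat.mod_eq_of_lt (by have := a1.isLt; omega)
    rw [if_neg h, if_neg h, h1, pow_succ]
    ring
end Rels

section Rels2
variable {K : Type*} [Field K] (q1 q2 lam μ1 μ2 μ3 μ4 : K) {N l2 : ℕ}

lemma mod1 {N a : ℕ} (h : 0 < N) (ha : a < N) : ((a + (N - 1)) % N + 1) % N = a := by
  rw [Nat.mod_add_mod, show a + (N - 1) + 1 = a + N by omega, Nat.add_mod_right,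
    Nat.mod_eq_of_lt ha]

lemma mod2 {N a : ℕ} (h : 0 < N) (ha : a < N) : ((a + 1) % N + (N - 1)) % N = a := by
  rw [Nat.mod_add_mod, show a + 1 + (N - 1) = a + N by omega, Nat.add_mod_right,
    Nat.mod_eq_of_lt ha]

lemma mod3 {N a : ℕ} (h0 : a ≠ 0) (ha : a < N) : (a + (N - 1)) % N = a - 1 := by
  rw [show a + (N - 1) = a - 1 + N by omega, Nat.add_mod_right, Nat.mod_eq_of_lt (by omega)]

-- `Y2 X1 = lam⁻¹ • X1 Y2`
lemma mrel2 (hN : 0 < N) (hl2 : 0 < l2) (hlamN : lam ^ (N * l2) = 1) (hlam0 : lam ≠ 0) :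
    sm (m2 N l2 hl2) (cY2 q2 lam μ2 μ3 μ4 N l2) * sm (p1 N l2 hN) (cX1 lam μ1 N l2) =
      lam⁻¹ • (sm (p1 N l2 hN) (cX1 lam μ1 N l2) * sm (m2 N l2 hl2) (cY2 q2 lam μ2 μ3 μ4 N l2)) := by
  rw [sm_mul, sm_mul, smul_sm]
  refine sm_ext (fun a => rfl) (fun a => ?_)
  obtain ⟨a1, a2⟩ := a
  dsimp +instances only [cX1, cY2, p1, m2]
  rcases eq_or_ne (a1 : ℕ) (N - 1) with h | h
  · have h1 : ((a1 : ℕ) + 1) % N = 0 := by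
      rw [h, Nat.sub_add_cancel hN, Nat.mod_self]
    rw [if_pos h, if_pos h, h1, h]
    have key : lam ^ (-((0 : ℕ) : ℤ)) * lam ^ (-(((a2 : ℕ) * N : ℕ) : ℤ)) =
        lam ^ ((-1 : ℤ)) * lam ^ (-(((((a2 : ℕ) + (l2 - 1)) % l2) * N : ℕ) : ℤ)) *
          lam ^ (-(((N - 1 : ℕ)) : ℤ)) := by
      rw [← zpow_add₀ hlam0, ← zpow_add₀ hlam0, ← zpow_add₀ hlam0]
      apply zpow_eq_of_dvd hlam0 hlamN
      rcases eq_or_ne (a2 : ℕ) 0 with h2 | h2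
      · have hm : ((a2 : ℕ) + (l2 - 1)) % l2 = l2 - 1 := by
          rw [h2, zero_add, Nat.mod_eq_of_lt (by omega)]
        rw [hm, h2]
        refine ⟨1, ?_⟩
        push_cast [Nat.cast_sub (by omega : 1 ≤ l2), Nat.cast_sub (by omega : 1 ≤ N)]
        ring
      · have hm : ((a2 : ℕ) + (l2 - 1)) % l2 = (a2 : ℕ) - 1 := mod3 h2 a2.isLt
        rw [hm]
        refine ⟨0, ?_⟩
        push_cast [Nat.cast_sub (by omega : 1 ≤ (a2 : ℕ)), Nat.cast_sub (by omega : 1 ≤ N)]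
        ring
    calc μ2⁻¹ * lam ^ (-((0 : ℕ) : ℤ)) * ((q2 ^ (a2 : ℕ) * μ4 - μ3) / (q2 - 1)) *
          (μ1 * lam ^ (-(((a2 : ℕ) * N : ℕ) : ℤ)))
        = μ2⁻¹ * ((q2 ^ (a2 : ℕ) * μ4 - μ3) / (q2 - 1)) * μ1 *
            (lam ^ (-((0 : ℕ) : ℤ)) * lam ^ (-(((a2 : ℕ) * N : ℕ) : ℤ))) := by ring
      _ = lam⁻¹ * (μ1 * lam ^ (-(((((a2 : ℕ) + (l2 - 1)) % l2) * N : ℕ) : ℤ)) *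
            (μ2⁻¹ * lam ^ (-(((N - 1 : ℕ)) : ℤ)) * ((q2 ^ (a2 : ℕ) * μ4 - μ3) / (q2 - 1)))) := by
          rw [key, _root_.zpow_neg_one]; ring
  · have h1 : ((a1 : ℕ) + 1) % N = (a1 : ℕ) + 1 :=
      Nat.mod_eq_of_lt (by have := a1.isLt; omega)
    rw [if_neg h, if_neg h, h1]
    have key : lam ^ (-(((a1 : ℕ) + 1 : ℕ) : ℤ)) = lam⁻¹ * lam ^ (-((a1 : ℕ) : ℤ)) := by
      have e : lam⁻¹ * lam ^ (-((a1 : ℕ) : ℤ)) = lam ^ ((-1 : ℤ) + -((a1 : ℕ) : ℤ)) := by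
        rw [zpow_add₀ hlam0, _root_.zpow_neg_one]
      rw [e]
      congr 1
      push_cast; ring
    rw [key]; ring

-- `Y2 Y1 = lam • Y1 Y2`
lemma mrel3 (hN : 0 < N) (hl2 : 0 < l2) (hlamN : lam ^ (N * l2) = 1) (hlam0 : lam ≠ 0) :
    sm (m2 N l2 hl2) (cY2 q2 lam μ2 μ3 μ4 N l2) * sm (m1 N l2 hN) (cY1 q1 lam μ1 μ3 N l2) =
      lam • (sm (m1 N l2 hN) (cY1 q1 lam μ1 μ3 N l2) * sm (m2 N l2 hl2) (cY2 q2 lam μ2 μ3 μ4 N l2)) := by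
  rw [sm_mul, sm_mul, smul_sm]
  refine sm_ext (fun a => rfl) (fun a => ?_)
  obtain ⟨a1, a2⟩ := a
  dsimp +instances only [cY1, cY2, m1, m2]
  rcases eq_or_ne (a1 : ℕ) 0 with h | h
  · have h1 : ((a1 : ℕ) + (N - 1)) % N = N - 1 := by
      rw [h, zero_add, Nat.mod_eq_of_lt (by omega)]
    rw [if_pos h, if_pos h, h1, h]
    have key : lam ^ (-((N - 1 : ℕ) : ℤ)) * lam ^ ((a2 : ℕ) * N) =
        lam ^ (1 : ℤ) * lam ^ (((((a2 : ℕ) + (l2 - 1)) % l2) * N : ℕ)) *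
          lam ^ (-((0 : ℕ) : ℤ)) := by
      rw [← zpow_natCast lam ((a2 : ℕ) * N),
        ← zpow_natCast lam (((((a2 : ℕ) + (l2 - 1)) % l2) * N : ℕ)),
        ← zpow_add₀ hlam0, ← zpow_add₀ hlam0, ← zpow_add₀ hlam0]
      apply zpow_eq_of_dvd hlam0 hlamN
      rcases eq_or_ne (a2 : ℕ) 0 with h2 | h2
      · have hm : ((a2 : ℕ) + (l2 - 1)) % l2 = l2 - 1 := by
          rw [h2, zero_add, Nat.mod_eq_of_lt (by omega)]
        rw [hm, h2]
        refine ⟨-1, ?_⟩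
        push_cast [Nat.cast_sub (by omega : 1 ≤ l2), Nat.cast_sub (by omega : 1 ≤ N)]
        ring
      · have hm : ((a2 : ℕ) + (l2 - 1)) % l2 = (a2 : ℕ) - 1 := mod3 h2 a2.isLt
        rw [hm]
        refine ⟨0, ?_⟩
        push_cast [Nat.cast_sub (by omega : 1 ≤ (a2 : ℕ)), Nat.cast_sub (by omega : 1 ≤ N)]
        ring
    calc μ2⁻¹ * lam ^ (-((N - 1 : ℕ) : ℤ)) * ((q2 ^ (a2 : ℕ) * μ4 - μ3) / (q2 - 1)) *
          (μ1⁻¹ * ((q1 ^ (0 : ℕ) * μ3 - 1) / (q1 - 1)) * lam ^ ((a2 : ℕ) * N))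
        = μ2⁻¹ * ((q2 ^ (a2 : ℕ) * μ4 - μ3) / (q2 - 1)) * (μ1⁻¹ * ((q1 ^ (0 : ℕ) * μ3 - 1) / (q1 - 1))) *
            (lam ^ (-((N - 1 : ℕ) : ℤ)) * lam ^ ((a2 : ℕ) * N)) := by ring
      _ = lam * (μ1⁻¹ * ((q1 ^ (0 : ℕ) * μ3 - 1) / (q1 - 1)) *
            lam ^ (((((a2 : ℕ) + (l2 - 1)) % l2) * N : ℕ)) *
            (μ2⁻¹ * lam ^ (-((0 : ℕ) : ℤ)) * ((q2 ^ (a2 : ℕ) * μ4 - μ3) / (q2 - 1)))) := by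
          rw [key, zpow_one]; ring
  · have h1 : ((a1 : ℕ) + (N - 1)) % N = (a1 : ℕ) - 1 := mod3 h a1.isLt
    rw [if_neg h, if_neg h, h1]
    have key : lam ^ (-(((a1 : ℕ) - 1 : ℕ) : ℤ)) = lam * lam ^ (-((a1 : ℕ) : ℤ)) := by
      have e : lam * lam ^ (-((a1 : ℕ) : ℤ)) = lam ^ ((1 : ℤ) + -((a1 : ℕ) : ℤ)) := by
        rw [zpow_add₀ hlam0, zpow_one]
      rw [e]
      congr 1
      push_cast [Nat.cast_sub (by omega : 1 ≤ (a1 : ℕ))]; ring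
    rw [key]; ring

-- `X2 Y1 = (q1⁻¹ lam⁻¹) • Y1 X2`
lemma mrel4 (hN : 0 < N) (hl2 : 0 < l2) (hq1N : q1 ^ N = 1) (hlamN : lam ^ (N * l2) = 1)
    (hlam0 : lam ≠ 0) (hq10 : q1 ≠ 0) :
    sm (p2 N l2 hl2) (cX2 q1 lam μ2 N l2) * sm (m1 N l2 hN) (cY1 q1 lam μ1 μ3 N l2) =
      (q1⁻¹ * lam⁻¹) • (sm (m1 N l2 hN) (cY1 q1 lam μ1 μ3 N l2) * sm (p2 N l2 hl2) (cX2 q1 lam μ2 N l2)) := by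
  rw [sm_mul, sm_mul, smul_sm]
  refine sm_ext (fun a => rfl) (fun a => ?_)
  obtain ⟨a1, a2⟩ := a
  dsimp +instances only [cX2, cY1, m1, p2]
  rcases eq_or_ne (a1 : ℕ) 0 with h | h
  · have h1 : ((a1 : ℕ) + (N - 1)) % N = N - 1 := by
      rw [h, zero_add, Nat.mod_eq_of_lt (by omega)]
    rw [if_pos h, if_pos h, h1, h]
    have key : (q1 * lam) ^ (N - 1) * lam ^ ((a2 : ℕ) * N) =
        q1⁻¹ * lam⁻¹ * lam ^ (((((a2 : ℕ) + 1) % l2) * N : ℕ)) := by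
      have hmul : q1 * lam ≠ 0 := mul_ne_zero hq10 hlam0
      have hstep : (q1 * lam) * ((q1 * lam) ^ (N - 1) * lam ^ ((a2 : ℕ) * N)) =
          (q1 * lam) * (q1⁻¹ * lam⁻¹ * lam ^ (((((a2 : ℕ) + 1) % l2) * N : ℕ))) := by
        have e1 : (q1 * lam) * (q1 * lam) ^ (N - 1) = lam ^ N := by
          rw [← pow_succ', Nat.sub_add_cancel hN, mul_pow, hq1N, one_mul]
        have e2 : (q1 * lam) * (q1⁻¹ * lam⁻¹) = 1 := by field_simp
        have e3 : lam ^ N * lam ^ ((a2 : ℕ) * N) = lam ^ (((((a2 : ℕ) + 1) % l2) * N : ℕ)) := by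
          rw [← pow_add]
          rw [← zpow_natCast lam (N + (a2 : ℕ) * N), ← zpow_natCast lam (((((a2 : ℕ) + 1) % l2) * N : ℕ))]
          apply zpow_eq_of_dvd hlam0 hlamN
          rcases eq_or_ne ((a2 : ℕ) + 1) l2 with h2 | h2
          · have hm : ((a2 : ℕ) + 1) % l2 = 0 := by rw [h2, Nat.mod_self]
            rw [hm, show (a2 : ℕ) = l2 - 1 by omega]
            refine ⟨1, ?_⟩
            push_cast [Nat.cast_sub (by omega : 1 ≤ l2)]
            ring
          · have hm : ((a2 : ℕ) + 1) % l2 = (a2 : ℕ) + 1 :=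
              Nat.mod_eq_of_lt (by have := a2.isLt; omega)
            rw [hm]
            refine ⟨0, ?_⟩
            push_cast; ring
        calc (q1 * lam) * ((q1 * lam) ^ (N - 1) * lam ^ ((a2 : ℕ) * N))
            = ((q1 * lam) * (q1 * lam) ^ (N - 1)) * lam ^ ((a2 : ℕ) * N) := by ring
          _ = lam ^ N * lam ^ ((a2 : ℕ) * N) := by rw [e1]
          _ = lam ^ (((((a2 : ℕ) + 1) % l2) * N : ℕ)) := e3
          _ = (q1 * lam) * (q1⁻¹ * lam⁻¹ * lam ^ (((((a2 : ℕ) + 1) % l2) * N : ℕ))) := by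
              rw [← mul_assoc, e2, one_mul]
      exact mul_left_cancel₀ hmul hstep
    calc μ2 * (q1 * lam) ^ (N - 1) * (μ1⁻¹ * ((q1 ^ (0 : ℕ) * μ3 - 1) / (q1 - 1)) * lam ^ ((a2 : ℕ) * N))
        = μ2 * (μ1⁻¹ * ((q1 ^ (0 : ℕ) * μ3 - 1) / (q1 - 1))) *
            ((q1 * lam) ^ (N - 1) * lam ^ ((a2 : ℕ) * N)) := by ring
      _ = q1⁻¹ * lam⁻¹ * (μ1⁻¹ * ((q1 ^ (0 : ℕ) * μ3 - 1) / (q1 - 1)) *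
            lam ^ (((((a2 : ℕ) + 1) % l2) * N : ℕ)) * (μ2 * (q1 * lam) ^ (0 : ℕ))) := by
          rw [key]; ring
  · have h1 : ((a1 : ℕ) + (N - 1)) % N = (a1 : ℕ) - 1 := mod3 h a1.isLt
    rw [if_neg h, if_neg h, h1]
    have key : (q1 * lam) ^ ((a1 : ℕ)) = (q1 * lam) ^ ((a1 : ℕ) - 1) * (q1 * lam) := by
      conv_lhs => rw [show (a1 : ℕ) = ((a1 : ℕ) - 1) + 1 by omega]
      rw [pow_succ]
    rw [key]
    have e2 : q1⁻¹ * lam⁻¹ * (q1 * lam) = 1 := by field_simp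
    linear_combination (-(μ2 * (μ1⁻¹ * ((q1 ^ (a1 : ℕ) * μ3 - 1) / (q1 - 1))) *
      (q1 * lam) ^ ((a1 : ℕ) - 1))) * e2
end Rels2

section Rels3
variable {K : Type*} [Field K] (q1 q2 lam μ1 μ2 μ3 μ4 : K) {N l2 : ℕ}

lemma cxy1 (hN : 0 < N) (hN2 : 2 ≤ N) (hlam0 : lam ≠ 0) (hμ1 : μ1 ≠ 0) :
    ∀ a : Fin N × Fin l2,
      cX1 lam μ1 N l2 (m1 N l2 hN a) * cY1 q1 lam μ1 μ3 N l2 a =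
        (q1 ^ (a.1 : ℕ) * μ3 - 1) / (q1 - 1) := by
  rintro ⟨a1, a2⟩
  dsimp +instances only [cX1, cY1, m1]
  rcases eq_or_ne (a1 : ℕ) 0 with h | h
  · have h1 : ((a1 : ℕ) + (N - 1)) % N = N - 1 := by
      rw [h, zero_add, Nat.mod_eq_of_lt (by omega)]
    rw [if_pos h, h1, if_pos rfl, h]
    have hc : lam ^ (-(((a2 : ℕ) * N : ℕ) : ℤ)) * lam ^ ((a2 : ℕ) * N) = 1 := by
      rw [← zpow_natCast lam ((a2 : ℕ) * N), ← zpow_add₀ hlam0, neg_add_cancel, zpow_zero]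
    calc μ1 * lam ^ (-(((a2 : ℕ) * N : ℕ) : ℤ)) *
          (μ1⁻¹ * ((q1 ^ (0 : ℕ) * μ3 - 1) / (q1 - 1)) * lam ^ ((a2 : ℕ) * N))
        = (μ1 * μ1⁻¹) * ((q1 ^ (0 : ℕ) * μ3 - 1) / (q1 - 1)) *
            (lam ^ (-(((a2 : ℕ) * N : ℕ) : ℤ)) * lam ^ ((a2 : ℕ) * N)) := by ring
      _ = (q1 ^ (0 : ℕ) * μ3 - 1) / (q1 - 1) := by
          rw [hc, mul_inv_cancel₀ hμ1, one_mul, mul_one]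
  · have h1 : ((a1 : ℕ) + (N - 1)) % N = (a1 : ℕ) - 1 := mod3 h a1.isLt
    have h2 : (a1 : ℕ) - 1 ≠ N - 1 := by have := a1.isLt; omega
    rw [h1, if_neg h2, if_neg h, mul_one]
    field_simp

lemma cxy2 (hl2 : 0 < l2) (hlam0 : lam ≠ 0) (hμ2 : μ2 ≠ 0) :
    ∀ a : Fin N × Fin l2,
      cX2 q1 lam μ2 N l2 (m2 N l2 hl2 a) * cY2 q2 lam μ2 μ3 μ4 N l2 a =
        q1 ^ (a.1 : ℕ) * ((q2 ^ (a.2 : ℕ) * μ4 - μ3) / (q2 - 1)) := by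
  rintro ⟨a1, a2⟩
  simp only [cX2, cY2, m2]
  have hc : (q1 * lam) ^ (a1 : ℕ) * lam ^ (-(((a1 : ℕ)) : ℤ)) = q1 ^ (a1 : ℕ) := by
    rw [mul_pow, mul_assoc, ← zpow_natCast lam ((a1 : ℕ)), ← zpow_add₀ hlam0,
      add_neg_cancel, zpow_zero, mul_one]
  calc μ2 * (q1 * lam) ^ (a1 : ℕ) *
        (μ2⁻¹ * lam ^ (-(((a1 : ℕ)) : ℤ)) * ((q2 ^ (a2 : ℕ) * μ4 - μ3) / (q2 - 1)))
      = (μ2 * μ2⁻¹) * ((q1 * lam) ^ (a1 : ℕ) * lam ^ (-(((a1 : ℕ)) : ℤ))) *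
          ((q2 ^ (a2 : ℕ) * μ4 - μ3) / (q2 - 1)) := by ring
    _ = q1 ^ (a1 : ℕ) * ((q2 ^ (a2 : ℕ) * μ4 - μ3) / (q2 - 1)) := by
        rw [hc, mul_inv_cancel₀ hμ2, one_mul]

lemma cyx1 (hN : 0 < N) (hN2 : 2 ≤ N) (hq1N : q1 ^ N = 1) (hlam0 : lam ≠ 0) (hμ1 : μ1 ≠ 0) :
    ∀ a : Fin N × Fin l2,
      cY1 q1 lam μ1 μ3 N l2 (p1 N l2 hN a) * cX1 lam μ1 N l2 a =
        (q1 ^ ((a.1 : ℕ) + 1) * μ3 - 1) / (q1 - 1) := by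
  rintro ⟨a1, a2⟩
  dsimp +instances only [cX1, cY1, p1]
  rcases eq_or_ne (a1 : ℕ) (N - 1) with h | h
  · have h1 : ((a1 : ℕ) + 1) % N = 0 := by rw [h, Nat.sub_add_cancel (by omega), Nat.mod_self]
    have h3 : q1 ^ ((a1 : ℕ) + 1) = q1 ^ (0 : ℕ) := by
      rw [h, Nat.sub_add_cancel (by omega), hq1N, pow_zero]
    rw [h1, if_pos rfl, if_pos h, h3]
    have hc : lam ^ ((a2 : ℕ) * N) * lam ^ (-(((a2 : ℕ) * N : ℕ) : ℤ)) = 1 := by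
      rw [← zpow_natCast lam ((a2 : ℕ) * N), ← zpow_add₀ hlam0, add_neg_cancel, zpow_zero]
    calc μ1⁻¹ * ((q1 ^ (0 : ℕ) * μ3 - 1) / (q1 - 1)) * lam ^ ((a2 : ℕ) * N) *
          (μ1 * lam ^ (-(((a2 : ℕ) * N : ℕ) : ℤ)))
        = (μ1 * μ1⁻¹) * ((q1 ^ (0 : ℕ) * μ3 - 1) / (q1 - 1)) *
            (lam ^ ((a2 : ℕ) * N) * lam ^ (-(((a2 : ℕ) * N : ℕ) : ℤ))) := by ring
      _ = (q1 ^ (0 : ℕ) * μ3 - 1) / (q1 - 1) := by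
          rw [hc, mul_inv_cancel₀ hμ1, one_mul, mul_one]
  · have h1 : ((a1 : ℕ) + 1) % N = (a1 : ℕ) + 1 :=
      Nat.mod_eq_of_lt (by have := a1.isLt; omega)
    have h2 : (a1 : ℕ) + 1 ≠ 0 := by omega
    rw [h1, if_neg h2, if_neg h, mul_one]
    field_simp

lemma cyx2 (hl2 : 0 < l2) (hq2l : q2 ^ l2 = 1) (hlam0 : lam ≠ 0) (hμ2 : μ2 ≠ 0) :
    ∀ a : Fin N × Fin l2,
      cY2 q2 lam μ2 μ3 μ4 N l2 (p2 N l2 hl2 a) * cX2 q1 lam μ2 N l2 a =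
        q1 ^ (a.1 : ℕ) * ((q2 ^ ((a.2 : ℕ) + 1) * μ4 - μ3) / (q2 - 1)) := by
  rintro ⟨a1, a2⟩
  simp only [cX2, cY2, p2]
  have hm : q2 ^ (((a2 : ℕ) + 1) % l2) = q2 ^ ((a2 : ℕ) + 1) := pow_mod_eq hq2l _
  have hc : lam ^ (-(((a1 : ℕ)) : ℤ)) * (q1 * lam) ^ (a1 : ℕ) = q1 ^ (a1 : ℕ) := by
    rw [mul_pow, ← mul_assoc, mul_comm (lam ^ (-(((a1 : ℕ)) : ℤ))) (q1 ^ (a1 : ℕ)), mul_assoc,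
      ← zpow_natCast lam ((a1 : ℕ)), ← zpow_add₀ hlam0, neg_add_cancel, zpow_zero, mul_one]
  calc μ2⁻¹ * lam ^ (-(((a1 : ℕ)) : ℤ)) * ((q2 ^ (((a2 : ℕ) + 1) % l2) * μ4 - μ3) / (q2 - 1)) *
        (μ2 * (q1 * lam) ^ (a1 : ℕ))
      = (μ2 * μ2⁻¹) * (lam ^ (-(((a1 : ℕ)) : ℤ)) * (q1 * lam) ^ (a1 : ℕ)) *
          ((q2 ^ (((a2 : ℕ) + 1) % l2) * μ4 - μ3) / (q2 - 1)) := by ring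
    _ = q1 ^ (a1 : ℕ) * ((q2 ^ ((a2 : ℕ) + 1) * μ4 - μ3) / (q2 - 1)) := by
        rw [hc, hm, mul_inv_cancel₀ hμ2, one_mul]

lemma id1 (hN : 0 < N) (hl2 : 0 < l2) :
    ∀ a : Fin N × Fin l2, m1 N l2 hN (p1 N l2 hN a) = a := by
  rintro ⟨a1, a2⟩
  simp only [m1, p1]
  exact Prod.ext (Fin.ext (mod2 hN a1.isLt)) rfl

lemma id2 (hN : 0 < N) (hl2 : 0 < l2) :
    ∀ a : Fin N × Fin l2, p1 N l2 hN (m1 N l2 hN a) = a := by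
  rintro ⟨a1, a2⟩
  simp only [m1, p1]
  exact Prod.ext (Fin.ext (mod1 hN a1.isLt)) rfl

lemma id3 (hN : 0 < N) (hl2 : 0 < l2) :
    ∀ a : Fin N × Fin l2, m2 N l2 hl2 (p2 N l2 hl2 a) = a := by
  rintro ⟨a1, a2⟩
  simp only [m2, p2]
  exact Prod.ext rfl (Fin.ext (mod2 hl2 a2.isLt))

lemma id4 (hN : 0 < N) (hl2 : 0 < l2) :
    ∀ a : Fin N × Fin l2, p2 N l2 hl2 (m2 N l2 hl2 a) = a := by
  rintro ⟨a1, a2⟩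
  simp only [m2, p2]
  exact Prod.ext rfl (Fin.ext (mod1 hl2 a2.isLt))

-- `Y1 X1 - q1 X1 Y1 = 1`
lemma mrel5 (hN : 0 < N) (hN2 : 2 ≤ N) (hl2 : 0 < l2) (hq1N : q1 ^ N = 1)
    (hq1ne : q1 ≠ 1) (hlam0 : lam ≠ 0) (hμ1 : μ1 ≠ 0) :
    sm (m1 N l2 hN) (cY1 q1 lam μ1 μ3 N l2) * sm (p1 N l2 hN) (cX1 lam μ1 N l2) -
      q1 • (sm (p1 N l2 hN) (cX1 lam μ1 N l2) * sm (m1 N l2 hN) (cY1 q1 lam μ1 μ3 N l2)) = 1 := by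
  rw [sm_mul, sm_mul, smul_sm]
  have hA : sm (fun a => m1 N l2 hN (p1 N l2 hN a))
      (fun a => cY1 q1 lam μ1 μ3 N l2 (p1 N l2 hN a) * cX1 lam μ1 N l2 a) =
      sm (fun a : Fin N × Fin l2 => a)
      (fun a => cY1 q1 lam μ1 μ3 N l2 (p1 N l2 hN a) * cX1 lam μ1 N l2 a) :=
    sm_ext (id1 hN hl2) (fun _ => rfl)
  have hB : sm (fun a => p1 N l2 hN (m1 N l2 hN a))
      (fun a => q1 * (cX1 lam μ1 N l2 (m1 N l2 hN a) * cY1 q1 lam μ1 μ3 N l2 a)) =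
      sm (fun a : Fin N × Fin l2 => a)
      (fun a => q1 * (cX1 lam μ1 N l2 (m1 N l2 hN a) * cY1 q1 lam μ1 μ3 N l2 a)) :=
    sm_ext (id2 hN hl2) (fun _ => rfl)
  rw [hA, hB, sm_sub, ← sm_one]
  refine sm_ext (fun _ => rfl) (fun a => ?_)
  rw [cyx1 q1 lam μ1 μ3 hN hN2 hq1N hlam0 hμ1 a, cxy1 q1 lam μ1 μ3 hN hN2 hlam0 hμ1 a,
    pow_succ]
  have hd : q1 - 1 ≠ 0 := sub_ne_zero.mpr hq1ne
  field_simp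
  ring

-- `Y2 X2 - q2 X2 Y2 = 1 + (q1-1) X1 Y1`
lemma mrel6 (hN : 0 < N) (hN2 : 2 ≤ N) (hl2 : 0 < l2) (hq2l : q2 ^ l2 = 1)
    (hq1ne : q1 ≠ 1) (hq2ne : q2 ≠ 1) (hlam0 : lam ≠ 0) (hμ1 : μ1 ≠ 0) (hμ2 : μ2 ≠ 0) :
    sm (m2 N l2 hl2) (cY2 q2 lam μ2 μ3 μ4 N l2) * sm (p2 N l2 hl2) (cX2 q1 lam μ2 N l2) -
      q2 • (sm (p2 N l2 hl2) (cX2 q1 lam μ2 N l2) * sm (m2 N l2 hl2) (cY2 q2 lam μ2 μ3 μ4 N l2)) =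
    1 + (q1 - 1) • (sm (p1 N l2 hN) (cX1 lam μ1 N l2) * sm (m1 N l2 hN) (cY1 q1 lam μ1 μ3 N l2)) := by
  rw [sm_mul, sm_mul, sm_mul, smul_sm, smul_sm]
  have hA : sm (fun a => m2 N l2 hl2 (p2 N l2 hl2 a))
      (fun a => cY2 q2 lam μ2 μ3 μ4 N l2 (p2 N l2 hl2 a) * cX2 q1 lam μ2 N l2 a) =
      sm (fun a : Fin N × Fin l2 => a)
      (fun a => cY2 q2 lam μ2 μ3 μ4 N l2 (p2 N l2 hl2 a) * cX2 q1 lam μ2 N l2 a) :=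
    sm_ext (id3 hN hl2) (fun _ => rfl)
  have hB : sm (fun a => p2 N l2 hl2 (m2 N l2 hl2 a))
      (fun a => q2 * (cX2 q1 lam μ2 N l2 (m2 N l2 hl2 a) * cY2 q2 lam μ2 μ3 μ4 N l2 a)) =
      sm (fun a : Fin N × Fin l2 => a)
      (fun a => q2 * (cX2 q1 lam μ2 N l2 (m2 N l2 hl2 a) * cY2 q2 lam μ2 μ3 μ4 N l2 a)) :=
    sm_ext (id4 hN hl2) (fun _ => rfl)
  have hC : sm (fun a => p1 N l2 hN (m1 N l2 hN a))
      (fun a => (q1 - 1) * (cX1 lam μ1 N l2 (m1 N l2 hN a) * cY1 q1 lam μ1 μ3 N l2 a)) =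
      sm (fun a : Fin N × Fin l2 => a)
      (fun a => (q1 - 1) * (cX1 lam μ1 N l2 (m1 N l2 hN a) * cY1 q1 lam μ1 μ3 N l2 a)) :=
    sm_ext (id2 hN hl2) (fun _ => rfl)
  rw [hA, hB, hC, sm_sub, ← sm_one, sm_add]
  refine sm_ext (fun _ => rfl) (fun a => ?_)
  rw [cyx2 q1 q2 lam μ2 μ3 μ4 hl2 hq2l hlam0 hμ2 a, cxy2 q1 q2 lam μ2 μ3 μ4 hl2 hlam0 hμ2 a,
    cxy1 q1 lam μ1 μ3 hN hN2 hlam0 hμ1 a, pow_succ]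
  have hd1 : q1 - 1 ≠ 0 := sub_ne_zero.mpr hq1ne
  have hd2 : q2 - 1 ≠ 0 := sub_ne_zero.mpr hq2ne
  field_simp
  ring

-- `Z1` matrix is diagonal `μ3 q1^{a1}`
lemma mz1 (hN : 0 < N) (hN2 : 2 ≤ N) (hl2 : 0 < l2) (hq1ne : q1 ≠ 1) (hlam0 : lam ≠ 0)
    (hμ1 : μ1 ≠ 0) :
    (1 : Matrix (Fin N × Fin l2) (Fin N × Fin l2) K) +
      (q1 - 1) • (sm (p1 N l2 hN) (cX1 lam μ1 N l2) * sm (m1 N l2 hN) (cY1 q1 lam μ1 μ3 N l2)) =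
    sm (fun a : Fin N × Fin l2 => a) (fun a => μ3 * q1 ^ (a.1 : ℕ)) := by
  rw [sm_mul, smul_sm]
  have hC : sm (fun a => p1 N l2 hN (m1 N l2 hN a))
      (fun a => (q1 - 1) * (cX1 lam μ1 N l2 (m1 N l2 hN a) * cY1 q1 lam μ1 μ3 N l2 a)) =
      sm (fun a : Fin N × Fin l2 => a)
      (fun a => (q1 - 1) * (cX1 lam μ1 N l2 (m1 N l2 hN a) * cY1 q1 lam μ1 μ3 N l2 a)) :=
    sm_ext (id2 hN hl2) (fun _ => rfl)
  rw [hC, ← sm_one, sm_add]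
  refine sm_ext (fun _ => rfl) (fun a => ?_)
  rw [cxy1 q1 lam μ1 μ3 hN hN2 hlam0 hμ1 a]
  have hd : q1 - 1 ≠ 0 := sub_ne_zero.mpr hq1ne
  field_simp
  ring

-- `Z2` matrix is diagonal `μ4 q1^{a1} q2^{a2}`
lemma mz2 (hN : 0 < N) (hl2 : 0 < l2) (hq2ne : q2 ≠ 1) (hlam0 : lam ≠ 0) (hμ2 : μ2 ≠ 0) :
    sm (fun a : Fin N × Fin l2 => a) (fun a => μ3 * q1 ^ (a.1 : ℕ)) +
      (q2 - 1) • (sm (p2 N l2 hl2) (cX2 q1 lam μ2 N l2) * sm (m2 N l2 hl2) (cY2 q2 lam μ2 μ3 μ4 N l2)) =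
    sm (fun a : Fin N × Fin l2 => a) (fun a => μ4 * q1 ^ (a.1 : ℕ) * q2 ^ (a.2 : ℕ)) := by
  rw [sm_mul, smul_sm]
  have hC : sm (fun a => p2 N l2 hl2 (m2 N l2 hl2 a))
      (fun a => (q2 - 1) * (cX2 q1 lam μ2 N l2 (m2 N l2 hl2 a) * cY2 q2 lam μ2 μ3 μ4 N l2 a)) =
      sm (fun a : Fin N × Fin l2 => a)
      (fun a => (q2 - 1) * (cX2 q1 lam μ2 N l2 (m2 N l2 hl2 a) * cY2 q2 lam μ2 μ3 μ4 N l2 a)) :=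
    sm_ext (id4 hN hl2) (fun _ => rfl)
  rw [hC, sm_add]
  refine sm_ext (fun _ => rfl) (fun a => ?_)
  rw [cxy2 q1 q2 lam μ2 μ3 μ4 hl2 hlam0 hμ2 a]
  have hd : q2 - 1 ≠ 0 := sub_ne_zero.mpr hq2ne
  field_simp
  ring
end Rels3

section Conv
variable {K : Type*} [Field K] (q1 q2 lam μ1 μ2 μ3 μ4 : K) {N l2 : ℕ}

lemma convX1 (hN : 0 < N) :
    (Matrix.of fun b a : Fin N × Fin l2 =>
      if (b.1 : ℕ) = ((a.1 : ℕ) + 1) % N ∧ b.2 = a.2 then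
        (if (a.1 : ℕ) = N - 1 then μ1 * lam ^ (-(((a.2 : ℕ) * N : ℕ) : ℤ)) else μ1)
      else 0) = sm (p1 N l2 hN) (cX1 lam μ1 N l2) := by
  ext b a
  dsimp +instances only [sm, Matrix.of_apply, p1, cX1]
  have hcond : ((b.1 : ℕ) = ((a.1 : ℕ) + 1) % N ∧ b.2 = a.2) ↔
      b = ((⟨((a.1 : ℕ) + 1) % N, Nat.mod_lt _ hN⟩ : Fin N), a.2) := by
    rw [Prod.ext_iff]
    simp [Fin.ext_iff]
  rw [if_congr hcond rfl rfl]

lemma convX2 (hl2 : 0 < l2) :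
    (Matrix.of fun b a : Fin N × Fin l2 =>
      if b.1 = a.1 ∧ (b.2 : ℕ) = ((a.2 : ℕ) + 1) % l2 then
        μ2 * (q1 * lam) ^ (a.1 : ℕ)
      else 0) = sm (p2 N l2 hl2) (cX2 q1 lam μ2 N l2) := by
  ext b a
  dsimp +instances only [sm, Matrix.of_apply, p2, cX2]
  have hcond : (b.1 = a.1 ∧ (b.2 : ℕ) = ((a.2 : ℕ) + 1) % l2) ↔
      b = (a.1, (⟨((a.2 : ℕ) + 1) % l2, Nat.mod_lt _ hl2⟩ : Fin l2)) := by
    rw [Prod.ext_iff]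
    simp [Fin.ext_iff]
  rw [if_congr hcond rfl rfl]

lemma convY1 (hN : 0 < N) :
    (Matrix.of fun b a : Fin N × Fin l2 =>
      if (b.1 : ℕ) = ((a.1 : ℕ) + (N - 1)) % N ∧ b.2 = a.2 then
        μ1⁻¹ * ((q1 ^ (a.1 : ℕ) * μ3 - 1) / (q1 - 1)) *
          (if (a.1 : ℕ) = 0 then lam ^ ((a.2 : ℕ) * N) else 1)
      else 0) = sm (m1 N l2 hN) (cY1 q1 lam μ1 μ3 N l2) := by
  ext b a
  dsimp +instances only [sm, Matrix.of_apply, m1, cY1]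
  have hcond : ((b.1 : ℕ) = ((a.1 : ℕ) + (N - 1)) % N ∧ b.2 = a.2) ↔
      b = ((⟨((a.1 : ℕ) + (N - 1)) % N, Nat.mod_lt _ hN⟩ : Fin N), a.2) := by
    rw [Prod.ext_iff]
    simp [Fin.ext_iff]
  rw [if_congr hcond rfl rfl]

lemma convY2 (hl2 : 0 < l2) :
    (Matrix.of fun b a : Fin N × Fin l2 =>
      if b.1 = a.1 ∧ (b.2 : ℕ) = ((a.2 : ℕ) + (l2 - 1)) % l2 then
        μ2⁻¹ * lam ^ (-((a.1 : ℕ) : ℤ)) * ((q2 ^ (a.2 : ℕ) * μ4 - μ3) / (q2 - 1))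
      else 0) = sm (m2 N l2 hl2) (cY2 q2 lam μ2 μ3 μ4 N l2) := by
  ext b a
  dsimp +instances only [sm, Matrix.of_apply, m2, cY2]
  have hcond : (b.1 = a.1 ∧ (b.2 : ℕ) = ((a.2 : ℕ) + (l2 - 1)) % l2) ↔
      b = (a.1, (⟨((a.2 : ℕ) + (l2 - 1)) % l2, Nat.mod_lt _ hl2⟩ : Fin l2)) := by
    rw [Prod.ext_iff]
    simp [Fin.ext_iff]
  rw [if_congr hcond rfl rfl]
end Conv

section Transfer
variable {K : Type*} [Field K] {ι : Type*} [Fintype ι] [DecidableEq ι]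

lemma tmul (A B : Matrix ι ι K) :
    Matrix.toLin' A * Matrix.toLin' B = Matrix.toLin' (A * B) := by
  rw [Matrix.toLin'_mul]; rfl

lemma tsmul (k : K) (A : Matrix ι ι K) :
    k • Matrix.toLin' A = Matrix.toLin' (k • A) :=
  (map_smul Matrix.toLin' k A).symm

lemma tone : (1 : Module.End K (ι → K)) = Matrix.toLin' 1 := by
  rw [Matrix.toLin'_one]; rfl

lemma tadd (A B : Matrix ι ι K) :
    Matrix.toLin' A + Matrix.toLin' B = Matrix.toLin' (A + B) := by
  ext v
  simp [Matrix.toLin'_apply, Matrix.add_mulVec]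

lemma tsub (A B : Matrix ι ι K) :
    Matrix.toLin' A - Matrix.toLin' B = Matrix.toLin' (A - B) := by
  ext v
  simp [Matrix.toLin'_apply, Matrix.sub_mulVec]
end Transfer

/-- the explicit Type-I module `V₁(μ)` for the second quantum Weyl
algebra `A(q₁,q₂,λ)`.  On the `K`-space with basis `e(a₁,a₂)`,
`0 ≤ a₁ ≤ l₁L₃ - 1`, `0 ≤ a₂ ≤ l₂ - 1`, the stated (right) actions of
`x₁, y₁, x₂, y₂` satisfy all six defining relations of `A(q₁,q₂,λ)` (written as
right-action operator identities, so that the operator of a product `uv` is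
`op v ∘ op u`), and the normal elements `z₁ = 1 + (q₁-1)y₁x₁`,
`z₂ = z₁ + (q₂-1)y₂x₂` act diagonally by `μ₃ q₁^{a₁}` and `μ₄ q₁^{a₁} q₂^{a₂}`. -/
theorem stmt_19 {K : Type*} [Field K] [IsAlgClosed K] (q1 q2 lam : K)
    (l1 l2 l3 : ℕ) (hl1 : 2 ≤ l1) (hl2 : 2 ≤ l2) (hl3 : 0 < l3)
    (ho1 : orderOf q1 = l1) (ho2 : orderOf q2 = l2) (ho3 : orderOf lam = l3)
    (L3 : ℕ) (hL3 : L3 = l3 / Nat.gcd l3 (l1 * l2))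
    (μ1 μ2 μ3 μ4 : K) (hμ1 : μ1 ≠ 0) (hμ2 : μ2 ≠ 0) (hμ3 : μ3 ≠ 0) (hμ4 : μ4 ≠ 0) :
    -- the basis `e(a₁,a₂)` of `V₁(μ)`
    let N := l1 * L3
    let e : Fin N × Fin l2 → (Fin N × Fin l2 → K) := fun a => Pi.single a 1
    -- action of `x₁`: `e(a₁,a₂) x₁ = μ₁ e(a₁+1,a₂)` cyclically, with twist
    -- `λ^{-a₂ l₁ L₃}` when wrapping around
    let X1 : Module.End K (Fin N × Fin l2 → K) := Matrix.toLin' (Matrix.of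
      fun b a : Fin N × Fin l2 =>
        if (b.1 : ℕ) = ((a.1 : ℕ) + 1) % N ∧ b.2 = a.2 then
          (if (a.1 : ℕ) = N - 1 then μ1 * lam ^ (-(((a.2 : ℕ) * N : ℕ) : ℤ)) else μ1)
        else 0)
    -- action of `x₂`: `e(a₁,a₂) x₂ = μ₂ (q₁λ)^{a₁} e(a₁,a₂+1)` cyclically
    let X2 : Module.End K (Fin N × Fin l2 → K) := Matrix.toLin' (Matrix.of
      fun b a : Fin N × Fin l2 =>
        if b.1 = a.1 ∧ (b.2 : ℕ) = ((a.2 : ℕ) + 1) % l2 then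
          μ2 * (q1 * lam) ^ (a.1 : ℕ)
        else 0)
    -- action of `y₁`: `e(a₁,a₂) y₁ = μ₁⁻¹ ((q₁^{a₁}μ₃ - 1)/(q₁-1)) e(a₁-1,a₂)`,
    -- with twist `λ^{a₂ l₁ L₃}` when `a₁ = 0`
    let Y1 : Module.End K (Fin N × Fin l2 → K) := Matrix.toLin' (Matrix.of
      fun b a : Fin N × Fin l2 =>
        if (b.1 : ℕ) = ((a.1 : ℕ) + (N - 1)) % N ∧ b.2 = a.2 then
          μ1⁻¹ * ((q1 ^ (a.1 : ℕ) * μ3 - 1) / (q1 - 1)) *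
            (if (a.1 : ℕ) = 0 then lam ^ ((a.2 : ℕ) * N) else 1)
        else 0)
    -- action of `y₂`: `e(a₁,a₂) y₂ = μ₂⁻¹ λ^{-a₁} ((q₂^{a₂}μ₄ - μ₃)/(q₂-1)) e(a₁,a₂-1)`
    let Y2 : Module.End K (Fin N × Fin l2 → K) := Matrix.toLin' (Matrix.of
      fun b a : Fin N × Fin l2 =>
        if b.1 = a.1 ∧ (b.2 : ℕ) = ((a.2 : ℕ) + (l2 - 1)) % l2 then
          μ2⁻¹ * lam ^ (-((a.1 : ℕ) : ℤ)) * ((q2 ^ (a.2 : ℕ) * μ4 - μ3) / (q2 - 1))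
        else 0)
    -- operators of the normal elements `z₁ = 1 + (q₁-1)y₁x₁`, `z₂ = z₁ + (q₂-1)y₂x₂`
    let Z1 : Module.End K (Fin N × Fin l2 → K) := 1 + (q1 - 1) • (X1 * Y1)
    let Z2 : Module.End K (Fin N × Fin l2 → K) := Z1 + (q2 - 1) • (X2 * Y2)
    -- the six defining relations of `A(q₁,q₂,λ)` hold (right-action form) …
    (X2 * X1 = (q1 * lam) • (X1 * X2)) ∧
    (Y2 * X1 = lam⁻¹ • (X1 * Y2)) ∧
    (Y2 * Y1 = lam • (Y1 * Y2)) ∧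
    (X2 * Y1 = (q1⁻¹ * lam⁻¹) • (Y1 * X2)) ∧
    (Y1 * X1 - q1 • (X1 * Y1) = 1) ∧
    (Y2 * X2 - q2 • (X2 * Y2) = 1 + (q1 - 1) • (X1 * Y1)) ∧
    -- … so `V₁(μ)` is an `A(q₁,q₂,λ)`-module, on which `z₁, z₂` act diagonally:
    (∀ a : Fin N × Fin l2, Z1 (e a) = (μ3 * q1 ^ (a.1 : ℕ)) • e a) ∧
    (∀ a : Fin N × Fin l2, Z2 (e a) = (μ4 * q1 ^ (a.1 : ℕ) * q2 ^ (a.2 : ℕ)) • e a) := by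
  intro N e X1 X2 Y1 Y2 Z1 Z2
  have hg : Nat.gcd l3 (l1 * l2) ∣ l3 := Nat.gcd_dvd_left _ _
  have hgpos : 0 < Nat.gcd l3 (l1 * l2) := Nat.gcd_pos_of_pos_left _ hl3
  have hL3pos : 0 < L3 := by
    rw [hL3]; exact Nat.div_pos (Nat.le_of_dvd hl3 hg) hgpos
  have hNpos : 0 < N := Nat.mul_pos (by omega) hL3pos
  have hN2 : 2 ≤ N := le_trans hl1 (Nat.le_mul_of_pos_right l1 hL3pos)
  have hl2pos : 0 < l2 := by omega
  have hq1l1 : q1 ^ l1 = 1 := by rw [← ho1]; exact pow_orderOf_eq_one q1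
  have hq2l2 : q2 ^ l2 = 1 := by rw [← ho2]; exact pow_orderOf_eq_one q2
  have hlam3 : lam ^ l3 = 1 := by rw [← ho3]; exact pow_orderOf_eq_one lam
  have hq1N : q1 ^ N = 1 := by
    show q1 ^ (l1 * L3) = 1
    rw [pow_mul, hq1l1, one_pow]
  have hlamN : lam ^ (N * l2) = 1 := by
    obtain ⟨k, hk⟩ := Nat.gcd_dvd_right l3 (l1 * l2)
    have h1 : Nat.gcd l3 (l1 * l2) * (l3 / Nat.gcd l3 (l1 * l2)) = l3 :=
      Nat.mul_div_cancel' hg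
    have h2 : N * l2 = l3 * k := by
      show l1 * L3 * l2 = l3 * k
      calc l1 * L3 * l2 = (l1 * l2) * L3 := by ring
        _ = (Nat.gcd l3 (l1 * l2) * k) * L3 := by rw [← hk]
        _ = k * (Nat.gcd l3 (l1 * l2) * L3) := by ring
        _ = k * l3 := by rw [hL3, h1]
        _ = l3 * k := by ring
    rw [h2, pow_mul, hlam3, one_pow]
  have hq1ne : q1 ≠ 1 := by
    intro h; rw [h, orderOf_one] at ho1; omega
  have hq2ne : q2 ≠ 1 := by
    intro h; rw [h, orderOf_one] at ho2; omega
  have hlam0 : lam ≠ 0 := by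
    intro h
    rw [h, zero_pow (by omega : l3 ≠ 0)] at hlam3
    exact one_ne_zero hlam3.symm
  have hq10 : q1 ≠ 0 := by
    intro h
    rw [h, zero_pow (by omega : l1 ≠ 0)] at hq1l1
    exact one_ne_zero hq1l1.symm
  have eX1 : X1 = Matrix.toLin' (sm (p1 N l2 hNpos) (cX1 lam μ1 N l2)) :=
    congrArg Matrix.toLin' (convX1 lam μ1 hNpos)
  have eX2 : X2 = Matrix.toLin' (sm (p2 N l2 hl2pos) (cX2 q1 lam μ2 N l2)) :=
    congrArg Matrix.toLin' (convX2 q1 lam μ2 hl2pos)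
  have eY1 : Y1 = Matrix.toLin' (sm (m1 N l2 hNpos) (cY1 q1 lam μ1 μ3 N l2)) :=
    congrArg Matrix.toLin' (convY1 q1 lam μ1 μ3 hNpos)
  have eY2 : Y2 = Matrix.toLin' (sm (m2 N l2 hl2pos) (cY2 q2 lam μ2 μ3 μ4 N l2)) :=
    congrArg Matrix.toLin' (convY2 q2 lam μ2 μ3 μ4 hl2pos)
  have he : ∀ a : Fin N × Fin l2, e a = Pi.single a 1 := fun _ => rfl
  have hZ : (1 : Module.End K (Fin N × Fin l2 → K)) + (q1 - 1) • (X1 * Y1) =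
      Matrix.toLin' (sm (fun a : Fin N × Fin l2 => a) (fun a => μ3 * q1 ^ (a.1 : ℕ))) := by
    rw [eX1, eY1, tmul, tsmul, tone, tadd]
    exact congrArg _ (mz1 q1 lam μ1 μ3 hNpos hN2 hl2pos hq1ne hlam0 hμ1)
  have hZ2 : (1 : Module.End K (Fin N × Fin l2 → K)) + (q1 - 1) • (X1 * Y1) +
      (q2 - 1) • (X2 * Y2) =
      Matrix.toLin' (sm (fun a : Fin N × Fin l2 => a)
        (fun a => μ4 * q1 ^ (a.1 : ℕ) * q2 ^ (a.2 : ℕ))) := by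
    rw [hZ, eX2, eY2, tmul, tsmul, tadd]
    exact congrArg _ (mz2 q1 q2 lam μ2 μ3 μ4 hNpos hl2pos hq2ne hlam0 hμ2)
  refine ⟨?_, ?_, ?_, ?_, ?_, ?_, ?_, ?_⟩
  · rw [eX1, eX2, tmul, tmul, tsmul]
    exact congrArg _ (mrel1 q1 lam μ1 μ2 hNpos hl2pos hq1N hlamN hlam0)
  · rw [eX1, eY2, tmul, tmul, tsmul]
    exact congrArg _ (mrel2 q2 lam μ1 μ2 μ3 μ4 hNpos hl2pos hlamN hlam0)
  · rw [eY1, eY2, tmul, tmul, tsmul]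
    exact congrArg _ (mrel3 q1 q2 lam μ1 μ2 μ3 μ4 hNpos hl2pos hlamN hlam0)
  · rw [eX2, eY1, tmul, tmul, tsmul]
    exact congrArg _ (mrel4 q1 lam μ1 μ2 μ3 hNpos hl2pos hq1N hlamN hlam0 hq10)
  · rw [eX1, eY1, tmul, tmul, tsmul, tsub, tone]
    exact congrArg _ (mrel5 q1 lam μ1 μ3 hNpos hN2 hl2pos hq1N hq1ne hlam0 hμ1)
  · rw [eX1, eX2, eY1, eY2, tmul, tmul, tmul, tsmul, tsmul, tsub, tone, tadd]
    exact congrArg _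
      (mrel6 q1 q2 lam μ1 μ2 μ3 μ4 hNpos hN2 hl2pos hq2l2 hq1ne hq2ne hlam0 hμ1 hμ2)
  · intro a
    rw [show Z1 = Matrix.toLin' (sm (fun b : Fin N × Fin l2 => b)
      (fun b => μ3 * q1 ^ (b.1 : ℕ))) from hZ, he a]
    exact toLin'_sm_single _ _ a
  · intro a
    rw [show Z2 = Matrix.toLin' (sm (fun b : Fin N × Fin l2 => b)
      (fun b => μ4 * q1 ^ (b.1 : ℕ) * q2 ^ (b.2 : ℕ))) from hZ2, he a]
    exact toLin'_sm_single _ _ a
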